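/- Let Z be the (2^d−2) × d binary matrix whose rows are indexed by nonempty proper subsets S of [d] with Z_{S,j} = 1 iff j ∈ S, and let W be the diagonal matrix with W_{S,S} = k(S) = (d−1)/(C(d,|S|)·|S|·(d−|S|)). Then Z^T W Z = ((d−1)/d)·I + c_d·1·1^T, where c_d = ((d−1)·H_{d−2} − (d−2))/d and 1 is the all-ones vector in R^d. -/

import Mathlib

open Finset Matrix

/-- Index type: nonempty proper subsets of `[d]`. -/
abbrev SubsetIdx (d : ℕ) := {S : Finset (Fin d) // S.Nonempty ∧ S ≠ Finset.univ}

/-- Shapley kernel weight `k(S) = (d-1)/(C(d,|S|)·|S|·(d-|S|))`. -/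
noncomputable def kernelWeight (d : ℕ) (S : Finset (Fin d)) : ℝ :=
  ((d : ℝ) - 1) / ((d.choose S.card : ℝ) * (S.card : ℝ) * ((d : ℝ) - (S.card : ℝ)))

/-- The binary subset-indicator matrix `Z`. -/
def Zmat (d : ℕ) : Matrix (SubsetIdx d) (Fin d) ℝ :=
  fun S j => if j ∈ S.1 then 1 else 0

/-- The diagonal kernel weight matrix `W`. -/
noncomputable def Wmat (d : ℕ) : Matrix (SubsetIdx d) (SubsetIdx d) ℝ :=
  Matrix.diagonal fun S => kernelWeight d S.1

/- ### Auxiliary definitions and lemmas -/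

noncomputable def Kf (d s : ℕ) : ℝ :=
  ((d : ℝ) - 1) / ((d.choose s : ℝ) * (s : ℝ) * ((d : ℝ) - (s : ℝ)))

lemma kernelWeight_eq (d : ℕ) (S : Finset (Fin d)) : kernelWeight d S = Kf d S.card := rfl

lemma Kf_self (d : ℕ) : Kf d d = 0 := by simp [Kf]

lemma card_contain {α : Type*} [Fintype α] [DecidableEq α] (T : Finset α) (s : ℕ)
    (hT : T.card ≤ s) :
    ((Finset.powersetCard s (Finset.univ : Finset α)).filter (fun S => T ⊆ S)).card
      = (Fintype.card α - T.card).choose (s - T.card) := by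
  rw [← Finset.card_compl T, ← Finset.card_powersetCard]
  apply Finset.card_bij' (fun S _ => S \ T) (fun R _ => R ∪ T)
  · intro S hS
    simp only [mem_filter, mem_powersetCard] at hS
    simp only [mem_powersetCard]
    refine ⟨fun x hx => ?_, ?_⟩
    · simp only [mem_sdiff] at hx
      simp [hx.2]
    · rw [Finset.card_sdiff_of_subset hS.2, hS.1.2]
  · intro R hR
    simp only [mem_powersetCard] at hR
    have hdisj : Disjoint R T :=
      Finset.disjoint_left.mpr fun a ha haT => (Finset.mem_compl.mp (hR.1 ha)) haT
    simp only [mem_filter, mem_powersetCard]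
    refine ⟨⟨subset_univ _, ?_⟩, subset_union_right⟩
    rw [Finset.card_union_of_disjoint hdisj, hR.2]
    omega
  · intro S hS
    simp only [mem_filter, mem_powersetCard] at hS
    exact Finset.sdiff_union_of_subset hS.2
  · intro R hR
    simp only [mem_powersetCard] at hR
    have hdisj : Disjoint R T :=
      Finset.disjoint_left.mpr fun a ha haT => (Finset.mem_compl.mp (hR.1 ha)) haT
    exact Finset.union_sdiff_cancel_right hdisj

lemma entry (d : ℕ) (i j : Fin d) :
    ((Zmat d)ᵀ * Wmat d * Zmat d) i j
      = ∑ S : Finset (Fin d), (if i ∈ S ∧ j ∈ S then kernelWeight d S else 0) := by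
  classical
  have h1 : ∀ S : SubsetIdx d, ((Zmat d)ᵀ * Wmat d) i S
      = (if i ∈ S.1 then kernelWeight d S.1 else 0) := by
    intro S
    rw [Wmat, Matrix.mul_diagonal]
    simp [Zmat, Matrix.transpose_apply, ite_mul]
  rw [Matrix.mul_apply]
  simp_rw [h1]
  have h2 : ∀ S : SubsetIdx d,
      (if i ∈ S.1 then kernelWeight d S.1 else 0) * Zmat d S j
      = (if i ∈ S.1 ∧ j ∈ S.1 then kernelWeight d S.1 else 0) := by
    intro S
    simp only [Zmat, mul_ite, mul_one, mul_zero, ite_and]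
    split <;> simp
  simp_rw [h2]
  rw [← Finset.sum_subtype
    (Finset.univ.filter (fun S : Finset (Fin d) => S.Nonempty ∧ S ≠ Finset.univ))
    (by simp)
    (fun S => if i ∈ S ∧ j ∈ S then kernelWeight d S else 0)]
  apply Finset.sum_subset (Finset.filter_subset _ _)
  intro S _ hS
  simp only [Finset.mem_filter, Finset.mem_univ, true_and, not_and_or] at hS
  rcases hS with h | h
  · have : S = ∅ := Finset.not_nonempty_iff_eq_empty.mp h
    simp [this]
  · have : S = Finset.univ := not_not.mp h
    subst this
    have : kernelWeight d Finset.univ = 0 := by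
      rw [kernelWeight_eq, Finset.card_univ, Fintype.card_fin, Kf_self]
    simp [this]

lemma sum_ite_kernel (d : ℕ) (p : Finset (Fin d) → Prop) [DecidablePred p] :
    ∑ S : Finset (Fin d), (if p S then kernelWeight d S else 0)
      = ∑ s ∈ Finset.range (d + 1),
          (((Finset.powersetCard s (Finset.univ : Finset (Fin d))).filter p).card : ℝ)
            * Kf d s := by
  rw [← Finset.powerset_univ, Finset.sum_powerset]
  rw [Finset.card_univ, Fintype.card_fin]
  refine Finset.sum_congr rfl fun s _ => ?_
  have : ∀ S ∈ Finset.powersetCard s (Finset.univ : Finset (Fin d)),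
      (if p S then kernelWeight d S else 0) = (if p S then Kf d s else 0) := by
    intro S hS
    rw [Finset.mem_powersetCard] at hS
    rw [kernelWeight_eq, hS.2]
  rw [Finset.sum_congr rfl this, ← Finset.sum_filter, Finset.sum_const, nsmul_eq_mul]

/-- choose algebra, one-point version -/
lemma choose_term (d s : ℕ) (hs1 : 1 ≤ s) (hsd : s ≤ d - 1) (hd : 3 ≤ d) :
    ((d - 1).choose (s - 1) : ℝ) * Kf d s
      = ((d : ℝ) - 1) / ((d : ℝ) * ((d : ℝ) - (s : ℝ))) := by
  have hsd' : s < d := by omega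
  have hc : d * (d - 1).choose (s - 1) = d.choose s * s := by
    have := Nat.add_one_mul_choose_eq (d - 1) (s - 1)
    have h1 : d - 1 + 1 = d := by omega
    have h2 : s - 1 + 1 = s := by omega
    rw [h1, h2] at this
    omega
  have hch : (0 : ℝ) < (d.choose s : ℝ) := by
    exact_mod_cast Nat.choose_pos (le_of_lt hsd')
  have hs0 : ((s : ℝ)) ≠ 0 := by positivity
  have hds : ((d : ℝ) - (s : ℝ)) ≠ 0 := by
    have : (s : ℝ) < (d : ℝ) := by exact_mod_cast hsd'
    linarith
  have hd0 : ((d : ℝ)) ≠ 0 := by positivity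
  have hc' : (d : ℝ) * ((d - 1).choose (s - 1) : ℝ) = (d.choose s : ℝ) * (s : ℝ) := by
    exact_mod_cast hc
  rw [Kf]
  field_simp
  linear_combination ((d:ℝ) - 1) * hc'

lemma choose_term2 (d s : ℕ) (hs1 : 2 ≤ s) (hsd : s ≤ d - 1) (hd : 3 ≤ d) :
    ((d - 2).choose (s - 2) : ℝ) * Kf d s
      = ((s : ℝ) - 1) / ((d : ℝ) * ((d : ℝ) - (s : ℝ))) := by
  have hsd' : s < d := by omega
  have hc : d * (d - 1) * (d - 2).choose (s - 2) = d.choose s * s * (s - 1) := by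
    have e1 := Nat.add_one_mul_choose_eq (d - 1) (s - 1)
    have e2 := Nat.add_one_mul_choose_eq (d - 2) (s - 2)
    have h1 : d - 1 + 1 = d := by omega
    have h2 : s - 1 + 1 = s := by omega
    have h3 : d - 2 + 1 = d - 1 := by omega
    have h4 : s - 2 + 1 = s - 1 := by omega
    rw [h1, h2] at e1
    rw [h3, h4] at e2
    calc d * (d - 1) * (d - 2).choose (s - 2) = d * ((d - 1) * (d - 2).choose (s - 2)) := by ring
    _ = d * ((d - 1).choose (s - 1) * (s - 1)) := by rw [e2]
    _ = (d * (d - 1).choose (s - 1)) * (s - 1) := by ring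
    _ = (d.choose s * s) * (s - 1) := by rw [e1]
  have hch : (0 : ℝ) < (d.choose s : ℝ) := by
    exact_mod_cast Nat.choose_pos (le_of_lt hsd')
  have hs0 : ((s : ℝ)) ≠ 0 := by positivity
  have hds : ((d : ℝ) - (s : ℝ)) ≠ 0 := by
    have : (s : ℝ) < (d : ℝ) := by exact_mod_cast hsd'
    linarith
  have hd0 : ((d : ℝ)) ≠ 0 := by positivity
  have hc' : (d : ℝ) * ((d : ℝ) - 1) * ((d - 2).choose (s - 2) : ℝ)
      = (d.choose s : ℝ) * (s : ℝ) * ((s : ℝ) - 1) := by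
    have h := congrArg (fun n : ℕ => (n : ℝ)) hc
    push_cast [Nat.cast_sub (by omega : 1 ≤ d), Nat.cast_sub (by omega : 1 ≤ s)] at h
    linarith [h]
  rw [Kf]
  field_simp
  linear_combination hc'

lemma diag_value (d : ℕ) (hd : 3 ≤ d) (i : Fin d) :
    ∑ S : Finset (Fin d), (if i ∈ S ∧ i ∈ S then kernelWeight d S else 0)
      = (((d : ℝ) - 1) * (∑ k ∈ Finset.Icc 1 (d - 2), (1 : ℝ) / (k : ℝ)) + 1) / (d : ℝ) := by
  classical
  have hd0 : ((d : ℝ)) ≠ 0 := by positivity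
  have hd1 : ((d : ℝ)) - 1 ≠ 0 := by
    have : (3 : ℝ) ≤ (d : ℝ) := by exact_mod_cast hd
    linarith
  simp only [and_self]
  rw [sum_ite_kernel d (fun S => i ∈ S)]
  have hsub : Finset.Icc 1 (d - 1) ⊆ Finset.range (d + 1) := by
    intro x hx; simp only [Finset.mem_Icc] at hx; simp only [Finset.mem_range]; omega
  have hzero : ∀ s ∈ Finset.range (d + 1), s ∉ Finset.Icc 1 (d - 1) →
      (((Finset.powersetCard s (Finset.univ : Finset (Fin d))).filter
          (fun S => i ∈ S)).card : ℝ) * Kf d s = 0 := by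
    intro s hs hs'
    simp only [Finset.mem_range] at hs
    simp only [Finset.mem_Icc, not_and_or, not_le] at hs'
    rcases hs' with h | h
    · have h0 : s = 0 := by omega
      subst h0
      have : ((Finset.powersetCard 0 (Finset.univ : Finset (Fin d))).filter
          (fun S => i ∈ S)) = ∅ := by
        apply Finset.filter_eq_empty_iff.mpr
        intro S hS
        rw [Finset.mem_powersetCard] at hS
        have : S = ∅ := Finset.card_eq_zero.mp hS.2
        simp [this]
      rw [this]
      simp
    · have h0 : s = d := by omega
      subst h0
      rw [Kf_self, mul_zero]
  rw [← Finset.sum_subset hsub hzero]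
  have step : ∀ s ∈ Finset.Icc 1 (d - 1),
      (((Finset.powersetCard s (Finset.univ : Finset (Fin d))).filter
          (fun S => i ∈ S)).card : ℝ) * Kf d s
        = (((d : ℝ) - 1) / (d : ℝ)) * (1 / ((d : ℝ) - (s : ℝ))) := by
    intro s hs
    rw [Finset.mem_Icc] at hs
    have hfil : ((Finset.powersetCard s (Finset.univ : Finset (Fin d))).filter
          (fun S => i ∈ S))
        = ((Finset.powersetCard s (Finset.univ : Finset (Fin d))).filter
          (fun S => ({i} : Finset (Fin d)) ⊆ S)) := by
      apply Finset.filter_congr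
      intro S _
      simp
    have hcard : ((Finset.powersetCard s (Finset.univ : Finset (Fin d))).filter
        (fun S => i ∈ S)).card = (d - 1).choose (s - 1) := by
      rw [hfil, card_contain {i} s (by simp; omega)]
      simp [Fintype.card_fin]
    rw [hcard, choose_term d s hs.1 hs.2 hd, div_mul_div_comm, mul_one]
  rw [Finset.sum_congr rfl step]
  have reind : ∑ s ∈ Finset.Icc 1 (d - 1), (((d : ℝ) - 1) / (d : ℝ)) * (1 / ((d : ℝ) - (s : ℝ)))
      = ∑ t ∈ Finset.Icc 1 (d - 1), (((d : ℝ) - 1) / (d : ℝ)) * (1 / (t : ℝ)) := by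
    apply Finset.sum_nbij' (fun s => d - s) (fun t => d - t)
    · intro a ha; simp only [Finset.mem_Icc] at *; omega
    · intro a ha; simp only [Finset.mem_Icc] at *; omega
    · intro a ha; simp only [Finset.mem_Icc] at ha; omega
    · intro a ha; simp only [Finset.mem_Icc] at ha; omega
    · intro a ha
      simp only [Finset.mem_Icc] at ha
      rw [Nat.cast_sub (by omega : a ≤ d)]
  rw [reind]
  have hsplit : d - 1 = (d - 2) + 1 := by omega
  rw [hsplit, Finset.sum_Icc_succ_top (by omega)]
  have hc1 : (((d - 2) + 1 : ℕ) : ℝ) = (d : ℝ) - 1 := by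
    push_cast [Nat.cast_sub (by omega : 2 ≤ d)]; ring
  rw [hc1, ← Finset.mul_sum]
  field_simp

lemma offdiag_value (d : ℕ) (hd : 3 ≤ d) (i j : Fin d) (hij : i ≠ j) :
    ∑ S : Finset (Fin d), (if i ∈ S ∧ j ∈ S then kernelWeight d S else 0)
      = (((d : ℝ) - 1) * (∑ k ∈ Finset.Icc 1 (d - 2), (1 : ℝ) / (k : ℝ))
          - ((d : ℝ) - 2)) / (d : ℝ) := by
  classical
  have hd0 : ((d : ℝ)) ≠ 0 := by positivity
  rw [sum_ite_kernel d (fun S => i ∈ S ∧ j ∈ S)]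
  have hsub : Finset.Icc 2 (d - 1) ⊆ Finset.range (d + 1) := by
    intro x hx; simp only [Finset.mem_Icc] at hx; simp only [Finset.mem_range]; omega
  have hzero : ∀ s ∈ Finset.range (d + 1), s ∉ Finset.Icc 2 (d - 1) →
      (((Finset.powersetCard s (Finset.univ : Finset (Fin d))).filter
          (fun S => i ∈ S ∧ j ∈ S)).card : ℝ) * Kf d s = 0 := by
    intro s hs hs'
    simp only [Finset.mem_range] at hs
    simp only [Finset.mem_Icc, not_and_or, not_le] at hs'
    rcases hs' with h | h
    · have h1 : s ≤ 1 := by omega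
      have : ((Finset.powersetCard s (Finset.univ : Finset (Fin d))).filter
          (fun S => i ∈ S ∧ j ∈ S)) = ∅ := by
        apply Finset.filter_eq_empty_iff.mpr
        intro S hS
        rw [Finset.mem_powersetCard] at hS
        rintro ⟨hi', hj'⟩
        have hsub2 : ({i, j} : Finset (Fin d)) ⊆ S := by
          rw [Finset.insert_subset_iff, Finset.singleton_subset_iff]
          exact ⟨hi', hj'⟩
        have := Finset.card_le_card hsub2
        rw [Finset.card_pair hij] at this
        omega
      rw [this]
      simp
    · have h0 : s = d := by omega
      subst h0
      rw [Kf_self, mul_zero]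
  rw [← Finset.sum_subset hsub hzero]
  have step : ∀ s ∈ Finset.Icc 2 (d - 1),
      (((Finset.powersetCard s (Finset.univ : Finset (Fin d))).filter
          (fun S => i ∈ S ∧ j ∈ S)).card : ℝ) * Kf d s
        = ((s : ℝ) - 1) / ((d : ℝ) * ((d : ℝ) - (s : ℝ))) := by
    intro s hs
    rw [Finset.mem_Icc] at hs
    have hfil : ((Finset.powersetCard s (Finset.univ : Finset (Fin d))).filter
          (fun S => i ∈ S ∧ j ∈ S))
        = ((Finset.powersetCard s (Finset.univ : Finset (Fin d))).filter
          (fun S => ({i, j} : Finset (Fin d)) ⊆ S)) := by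
      apply Finset.filter_congr
      intro S _
      rw [Finset.insert_subset_iff, Finset.singleton_subset_iff]
    have hcard2 : ({i, j} : Finset (Fin d)).card = 2 := Finset.card_pair hij
    have hcard : ((Finset.powersetCard s (Finset.univ : Finset (Fin d))).filter
        (fun S => i ∈ S ∧ j ∈ S)).card = (d - 2).choose (s - 2) := by
      rw [hfil, card_contain {i, j} s (by rw [hcard2]; omega)]
      rw [hcard2, Fintype.card_fin]
    rw [hcard, choose_term2 d s hs.1 hs.2 hd]
  rw [Finset.sum_congr rfl step]
  have reind : ∑ s ∈ Finset.Icc 2 (d - 1), ((s : ℝ) - 1) / ((d : ℝ) * ((d : ℝ) - (s : ℝ)))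
      = ∑ t ∈ Finset.Icc 1 (d - 2), ((d : ℝ) - (t : ℝ) - 1) / ((d : ℝ) * (t : ℝ)) := by
    apply Finset.sum_nbij' (fun s => d - s) (fun t => d - t)
    · intro a ha; simp only [Finset.mem_Icc] at *; omega
    · intro a ha; simp only [Finset.mem_Icc] at *; omega
    · intro a ha; simp only [Finset.mem_Icc] at ha; omega
    · intro a ha; simp only [Finset.mem_Icc] at ha; omega
    · intro a ha
      simp only [Finset.mem_Icc] at ha
      rw [Nat.cast_sub (by omega : a ≤ d)]
      ring_nf
  rw [reind]
  have step2 : ∀ t ∈ Finset.Icc 1 (d - 2),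
      ((d : ℝ) - (t : ℝ) - 1) / ((d : ℝ) * (t : ℝ))
        = (((d : ℝ) - 1) / (d : ℝ)) * (1 / (t : ℝ)) - 1 / (d : ℝ) := by
    intro t ht
    rw [Finset.mem_Icc] at ht
    have ht0 : ((t : ℝ)) ≠ 0 := by
      have : 1 ≤ t := ht.1
      positivity
    field_simp
    ring
  rw [Finset.sum_congr rfl step2, Finset.sum_sub_distrib, Finset.sum_const,
    ← Finset.mul_sum, Nat.card_Icc]
  have hcc : d - 2 + 1 - 1 = d - 2 := by omega
  rw [hcc]
  have hcc2 : ((d - 2 : ℕ) : ℝ) = (d : ℝ) - 2 := by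
    push_cast [Nat.cast_sub (by omega : 2 ≤ d)]; ring
  rw [nsmul_eq_mul, hcc2]
  field_simp
 

/-- `Zᵀ W Z = ((d-1)/d)·I + c_d·𝟙𝟙ᵀ` with `c_d = ((d-1)H_{d-2} - (d-2))/d`. -/
theorem stmt_2 (d : ℕ) (hd : 3 ≤ d) :
    (Zmat d)ᵀ * Wmat d * Zmat d
      = (((d : ℝ) - 1) / (d : ℝ)) • (1 : Matrix (Fin d) (Fin d) ℝ)
        + ((((d : ℝ) - 1) * (∑ k ∈ Finset.Icc 1 (d - 2), (1 : ℝ) / (k : ℝ))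
              - ((d : ℝ) - 2)) / (d : ℝ))
            • (Matrix.of (fun _ _ => (1 : ℝ)) : Matrix (Fin d) (Fin d) ℝ) := by
  have hd0 : ((d : ℝ)) ≠ 0 := by positivity
  ext i j
  rw [entry d i j, Matrix.add_apply, Matrix.smul_apply, Matrix.smul_apply, Matrix.of_apply,
    smul_eq_mul, smul_eq_mul, mul_one]
  by_cases hij : i = j
  · subst hij
    rw [Matrix.one_apply_eq, mul_one, diag_value d hd i]
    field_simp
    ring
  · rw [Matrix.one_apply_ne hij, mul_zero, zero_add, offdiag_value d hd i j hij]
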